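/- arXiv:2206.11716 — 2 statements merged into one kernel-verified Lean document; each statement's English description precedes it below -/
import Mathlib

section
/- Let N be a normal subgroup of a finite group G, let M/N be a non-abelian chief factor of G, and let λ be an irreducible character of N. If λ extends to an irreducible character λ₀ of M, then the inertia group of λ in G equals the inertia group of λ₀ in G. -/
open scoped BigOperators Classical
open CategoryTheory

/-- `χ : G → ℂ` is the character of an irreducible complex representation of `G`. -/
def IsIrrChar (G : Type) [Group G] (χ : G → ℂ) : Prop :=
  ∃ V : FDRep ℂ G, Simple V ∧ ∀ g, V.character g = χ g

/-- A character is rational-valued if all its values lie in `ℚ`. -/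
def RatValued {G : Type} (χ : G → ℂ) : Prop := ∀ g, ∃ q : ℚ, χ g = (q : ℂ)

/-- A character is real-valued if all its values lie in `ℝ`. -/
def RealValued {G : Type} (χ : G → ℂ) : Prop := ∀ g, (χ g).im = 0

/-- A character has even degree. -/
def EvenDeg {G : Type} [One G] (χ : G → ℂ) : Prop := ∃ k : ℕ, χ 1 = ((2 * k : ℕ) : ℂ)

/-- The kernel of the character `χ` contains the subgroup `N`. -/
def KerContains {G : Type} [Group G] (χ : G → ℂ) (N : Subgroup G) : Prop :=
  ∀ n ∈ N, χ n = χ 1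

/-- The induced class function `f ^ G` of `f : N → ℂ`. -/
noncomputable def Ind {G : Type} [Group G] [Fintype G] (N : Subgroup G) (f : ↥N → ℂ) : G → ℂ :=
  fun g => (Nat.card N : ℂ)⁻¹ *
    ∑ x : G, if h : x⁻¹ * g * x ∈ N then f ⟨x⁻¹ * g * x, h⟩ else 0

/-- The standard inner product of class functions on a finite group. -/
noncomputable def cInner {G : Type} [Fintype G] (f g : G → ℂ) : ℂ :=
  (Fintype.card G : ℂ)⁻¹ * ∑ x : G, f x * (starRingEnd ℂ) (g x)

/-- `χ` is an irreducible constituent of the class function `f`. -/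
def IsConstituent {G : Type} [Group G] [Fintype G] (f χ : G → ℂ) : Prop :=
  IsIrrChar G χ ∧ cInner f χ ≠ 0

lemma lam_congr {G : Type} [Group G] {N : Subgroup G} (lam : ↥N → ℂ)
    {x y : G} (px : x ∈ N) (py : y ∈ N) (h : x = y) : lam ⟨x, px⟩ = lam ⟨y, py⟩ := by
  subst h; rfl

/-- The inertia group `I_G(λ)` of a character `λ` of a normal subgroup `N` of `G`. -/
def inertia {G : Type} [Group G] (N : Subgroup G) [hN : N.Normal] (lam : ↥N → ℂ) :
    Subgroup G where
  carrier := {g | ∀ n : ↥N, lam ⟨g * n * g⁻¹, hN.conj_mem n n.2 g⟩ = lam n}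
  one_mem' := by
    intro n
    exact lam_congr lam _ n.2 (by group)
  mul_mem' := by
    intro a b ha hb n
    have h1 := ha ⟨(b : G) * n * b⁻¹, hN.conj_mem _ n.2 b⟩
    calc lam ⟨(a * b) * n * (a * b)⁻¹, _⟩
        = lam ⟨a * ((b : G) * n * b⁻¹) * a⁻¹, hN.conj_mem _ (hN.conj_mem _ n.2 b) a⟩ :=
          lam_congr lam _ _ (by group)
      _ = lam ⟨(b : G) * n * b⁻¹, hN.conj_mem _ n.2 b⟩ := h1
      _ = lam n := hb n
  inv_mem' := by
    intro a ha n
    have h1 := ha ⟨a⁻¹ * (n : G) * a⁻¹⁻¹, hN.conj_mem _ n.2 a⁻¹⟩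
    have h2 : lam ⟨a * (a⁻¹ * (n : G) * a⁻¹⁻¹) * a⁻¹,
        hN.conj_mem _ (hN.conj_mem _ n.2 a⁻¹) a⟩ = lam n :=
      lam_congr lam _ n.2 (by group)
    exact h1.symm.trans h2

section
open Module Representation
open scoped commutatorElement
noncomputable section
namespace Stmt1Aux

def cardInv (H : Type) [Group H] [Fintype H] : Invertible (Fintype.card H : ℂ) :=
  invertibleOfNonzero (Nat.cast_ne_zero.mpr Fintype.card_ne_zero)

lemma average_char_hom {H : Type} [Group H] [Fintype H] [Invertible (Fintype.card H : ℂ)]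
    (V W : FDRep ℂ H) :
    ⅟ (Fintype.card H : ℂ) • ∑ g : H, V.character g * W.character g⁻¹
      = (finrank ℂ (W ⟶ V) : ℂ) := by
  conv_lhs =>
    enter [2, 2, g]
    rw [mul_comm, ← FDRep.char_dual, ← Pi.mul_apply, ← FDRep.char_tensor]
    rw [FDRep.char_iso (FDRep.dualTensorIsoLinHom W.ρ V)]
  rw [smul_eq_mul, invOf_eq_inv, ← Nat.card_eq_fintype_card, FDRep.average_char_eq_finrank_invariants]
  rw [show (FDRep.of (linHom W.ρ V.ρ)).ρ = linHom W.ρ V.ρ from FDRep.of_ρ' (linHom W.ρ V.ρ)]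
  erw [(linHom.invariantsEquivFDRepHom W V).finrank_eq]

lemma finrank_hom_congr {H : Type} [Group H] [Fintype H] (V W V' W' : FDRep ℂ H)
    (hV : ∀ x, V.character x = V'.character x) (hW : ∀ x, W.character x = W'.character x) :
    finrank ℂ (W ⟶ V) = finrank ℂ (W' ⟶ V') := by
  haveI := cardInv H
  have h1 := average_char_hom V W
  have h2 := average_char_hom V' W'
  have h3 : (finrank ℂ (W ⟶ V) : ℂ) = (finrank ℂ (W' ⟶ V') : ℂ) := by
    rw [← h1, ← h2]
    congr 1
    exact Finset.sum_congr rfl fun g _ => by rw [hV, hW]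
  exact_mod_cast h3

lemma hom_injective {H : Type} [Group H] {X Y : FDRep ℂ H} (f : X ⟶ Y) [Mono f] :
    Function.Injective f.hom := by
  have m2 : Mono ((forget₂ (FGModuleCat ℂ) (ModuleCat ℂ)).map
      ((Action.forget (FGModuleCat ℂ) (MonCat.of H)).map f)) := inferInstance
  exact (ModuleCat.mono_iff_injective _).mp m2

lemma exists_ne_zero_hom {H : Type} [Group H] {X Y : FDRep ℂ H}
    (h : finrank ℂ (X ⟶ Y) = 1) : ∃ f : X ⟶ Y, f ≠ 0 := by
  have : 0 < finrank ℂ (X ⟶ Y) := by omega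
  have : Nontrivial (X ⟶ Y) := Module.nontrivial_of_finrank_pos this
  exact exists_ne 0

lemma simple_of_char_eq {H : Type} [Group H] [Fintype H] (Y X : FDRep ℂ H) [Simple Y]
    (h : ∀ x, X.character x = Y.character x) : Simple X := by
  have hfr : finrank ℂ (Y ⟶ X) = 1 := by
    rw [finrank_hom_congr X Y Y Y h (fun _ => rfl)]
    rw [FDRep.finrank_hom_simple_simple]
    exact if_pos ⟨Iso.refl Y⟩
  obtain ⟨f, hf⟩ := exists_ne_zero_hom hfr
  haveI : Mono f := mono_of_nonzero_from_simple hf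
  have hinj : Function.Injective f.hom := hom_injective f
  have hdim : finrank ℂ Y = finrank ℂ X := by
    have h1 := h 1
    rw [FDRep.char_one, FDRep.char_one] at h1
    exact_mod_cast h1.symm
  have hbij : Function.Bijective f.hom :=
    ⟨hinj, (LinearMap.injective_iff_surjective_of_finrank_eq_finrank hdim).mp hinj⟩
  let e : (Y : Type) ≃ₗ[ℂ] (X : Type) := LinearEquiv.ofBijective f.hom.hom.hom hbij
  let i : Y ≅ X := Action.mkIso e.toFGModuleCatIso (fun g => f.comm g)
  exact Simple.of_iso i.symm

lemma key {G : Type} [Group G] [Fintype G] (N M : Subgroup G)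
    [hN : N.Normal] [hM : M.Normal] (hNM : N ≤ M)
    (hMgen : M ≤ N ⊔ ⁅M, M⁆)
    (lam : ↥N → ℂ) (U : FDRep ℂ ↥N) (hUs : Simple U) (hU : ∀ n, U.character n = lam n)
    (lam0 : ↥M → ℂ) (W : FDRep ℂ ↥M) (hWs : Simple W) (hW : ∀ m, W.character m = lam0 m)
    (hext : ∀ (n : G) (hn : n ∈ N), lam0 ⟨n, hNM hn⟩ = lam ⟨n, hn⟩)
    (g : G) (hg : ∀ n : ↥N, lam ⟨g * ↑n * g⁻¹, hN.conj_mem ↑n n.2 g⟩ = lam n) :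
    ∀ m : ↥M, lam0 ⟨g * ↑m * g⁻¹, hM.conj_mem ↑m m.2 g⟩ = lam0 m := by
  haveI : Fintype ↥N := Fintype.ofFinite _
  haveI : Fintype ↥M := Fintype.ofFinite _
  haveI := hUs
  haveI := hWs
  -- the conjugation monoid hom on M
  let conjM : ↥M →* ↥M :=
    { toFun := fun m => ⟨g * ↑m * g⁻¹, hM.conj_mem ↑m m.2 g⟩
      map_one' := by ext; simp
      map_mul' := fun a b => by ext; push_cast; group }
  let ι : ↥N →* ↥M := Subgroup.inclusion hNM
  let κ : ↥N →* ↥M := conjM.comp ι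
  let resW : FDRep ℂ ↥N := FDRep.of (W.ρ.comp ι)
  let resV : FDRep ℂ ↥N := FDRep.of (W.ρ.comp κ)
  have hch : ∀ (f : ↥N →* ↥M) (n : ↥N),
      (FDRep.of ((W.ρ).comp f)).character n = W.character (f n) := fun f n => rfl
  have hchW : ∀ n, resW.character n = lam n := by
    intro n
    rw [hch ι n, hW]
    exact hext ↑n n.2
  have hchV : ∀ n, resV.character n = lam n := by
    intro n
    rw [hch κ n, hW]
    rw [show lam0 (κ n) = lam ⟨g * ↑n * g⁻¹, hN.conj_mem ↑n n.2 g⟩ from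
      hext (g * ↑n * g⁻¹) (hN.conj_mem ↑n n.2 g)]
    exact hg n
  have hfr : finrank ℂ (resW ⟶ resV) = 1 := by
    rw [finrank_hom_congr resV resW U U (fun x => (hchV x).trans (hU x).symm)
      (fun x => (hchW x).trans (hU x).symm)]
    rw [FDRep.finrank_hom_simple_simple]
    exact if_pos ⟨Iso.refl U⟩
  obtain ⟨r, hr⟩ := exists_ne_zero_hom hfr
  let T : (W : Type) →ₗ[ℂ] (W : Type) := r.hom.hom.hom
  have hT0 : T ≠ 0 := by
    intro h
    exact hr (Action.Hom.ext (by rw [Action.zero_hom]; exact FGModuleCat.hom_ext h))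
  have hTx : ∀ (n : ↥N) (x : (W : Type)), T (W.ρ (ι n) x) = W.ρ (κ n) (T x) := by
    intro n x
    exact LinearMap.congr_fun (congrArg (fun φ => φ.hom.hom) (r.comm n)) x
  have mulρ : ∀ (a b : ↥M) (x : (W : Type)), W.ρ a (W.ρ b x) = W.ρ (a * b) x := by
    intro a b x
    rw [map_mul]
    rfl
  let A : ↥M → ((W : Type) →ₗ[ℂ] (W : Type)) :=
    fun m => (W.ρ (conjM m)) ∘ₗ T ∘ₗ (W.ρ m⁻¹)
  have hAx : ∀ m x, A m x = W.ρ (conjM m) (T (W.ρ m⁻¹ x)) := fun _ _ => rfl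
  have hAcommx : ∀ (m : ↥M) (n : ↥N) (x : (W : Type)),
      A m (W.ρ (ι n) x) = W.ρ (κ n) (A m x) := by
    intro m n x
    have hn' : (↑m)⁻¹ * (↑n : G) * ↑m ∈ N := by
      simpa using hN.conj_mem ↑n n.2 ((↑m)⁻¹ : G)
    set n' : ↥N := ⟨(↑m)⁻¹ * (↑n : G) * ↑m, hn'⟩ with hn'def
    have hid1 : m⁻¹ * ι n = ι n' * m⁻¹ := by
      ext
      show (↑m)⁻¹ * (↑n : G) = ((↑m)⁻¹ * ↑n * ↑m) * (↑m)⁻¹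
      group
    have hid2 : conjM m * κ n' = κ n * conjM m := by
      ext
      show (g * ↑m * g⁻¹) * (g * ((↑m)⁻¹ * ↑n * ↑m) * g⁻¹)
        = (g * ↑n * g⁻¹) * (g * ↑m * g⁻¹)
      group
    calc A m (W.ρ (ι n) x)
        = W.ρ (conjM m) (T (W.ρ m⁻¹ (W.ρ (ι n) x))) := hAx m _
      _ = W.ρ (conjM m) (T (W.ρ (m⁻¹ * ι n) x)) := by rw [mulρ]
      _ = W.ρ (conjM m) (T (W.ρ (ι n' * m⁻¹) x)) := by rw [hid1]
      _ = W.ρ (conjM m) (T (W.ρ (ι n') (W.ρ m⁻¹ x))) := by rw [mulρ]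
      _ = W.ρ (conjM m) (W.ρ (κ n') (T (W.ρ m⁻¹ x))) := by rw [hTx]
      _ = W.ρ (conjM m * κ n') (T (W.ρ m⁻¹ x)) := by rw [mulρ]
      _ = W.ρ (κ n * conjM m) (T (W.ρ m⁻¹ x)) := by rw [hid2]
      _ = W.ρ (κ n) (W.ρ (conjM m) (T (W.ρ m⁻¹ x))) := by rw [mulρ]
      _ = W.ρ (κ n) (A m x) := by rw [hAx]
  let Am : ↥M → (resW ⟶ resV) := fun m =>
    { hom := FGModuleCat.ofHom (A m)
      comm := fun n => FGModuleCat.hom_ext (LinearMap.ext fun x => hAcommx m n x) }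
  have hspan : ∀ s : resW ⟶ resV, ∃ cc : ℂ, s = cc • r := by
    intro s
    obtain ⟨cc, hcc⟩ := (finrank_eq_one_iff_of_nonzero' r hr).mp hfr s
    exact ⟨cc, hcc.symm⟩
  choose c hc using fun m => hspan (Am m)
  have hA : ∀ m, A m = c m • T := by
    intro m
    have h1 := congrArg Action.Hom.hom (hc m)
    rw [Action.smul_hom] at h1
    exact congrArg (fun φ => φ.hom.hom) h1
  have huniq : ∀ {c₁ c₂ : ℂ}, c₁ • T = c₂ • T → c₁ = c₂ := by
    intro c₁ c₂ h
    have h2 : (c₁ - c₂) • T = 0 := by rw [sub_smul, h, sub_self]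
    rcases smul_eq_zero.mp h2 with h3 | h3
    · exact sub_eq_zero.mp h3
    · exact absurd h3 hT0
  have hc1 : c 1 = 1 := by
    apply huniq
    rw [← hA 1, one_smul]
    apply LinearMap.ext
    intro x
    rw [hAx]
    simp [map_one]
  have hcmul : ∀ m₁ m₂ : ↥M, c (m₁ * m₂) = c m₂ * c m₁ := by
    intro m₁ m₂
    apply huniq
    rw [← hA (m₁ * m₂)]
    apply LinearMap.ext
    intro x
    calc A (m₁ * m₂) x
        = W.ρ (conjM m₁) (W.ρ (conjM m₂) (T (W.ρ m₂⁻¹ (W.ρ m₁⁻¹ x)))) := by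
          rw [hAx, map_mul conjM, mul_inv_rev, ← mulρ, ← mulρ]
      _ = W.ρ (conjM m₁) (A m₂ (W.ρ m₁⁻¹ x)) := by rw [hAx]
      _ = W.ρ (conjM m₁) ((c m₂ • T) (W.ρ m₁⁻¹ x)) := by rw [← hA m₂]
      _ = c m₂ • (W.ρ (conjM m₁) (T (W.ρ m₁⁻¹ x))) := by
          rw [LinearMap.smul_apply, map_smul]
      _ = c m₂ • (A m₁ x) := by rw [hAx]
      _ = c m₂ • ((c m₁ • T) x) := by rw [← hA m₁]
      _ = (c m₂ * c m₁) • T x := by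
          rw [LinearMap.smul_apply, smul_smul]
      _ = ((c m₂ * c m₁) • T) x := rfl
  have hcN : ∀ n : ↥N, c (ι n) = 1 := by
    intro n
    apply huniq
    rw [← hA (ι n), one_smul]
    apply LinearMap.ext
    intro x
    have hone : conjM (ι n) * κ n⁻¹ = 1 := by
      show κ n * κ n⁻¹ = 1
      rw [← map_mul κ, mul_inv_cancel, map_one]
    calc A (ι n) x
        = W.ρ (conjM (ι n)) (T (W.ρ ((ι n)⁻¹) x)) := hAx _ _
      _ = W.ρ (conjM (ι n)) (T (W.ρ (ι n⁻¹) x)) := by rw [← map_inv ι n]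
      _ = W.ρ (conjM (ι n)) (W.ρ (κ n⁻¹) (T x)) := by rw [hTx]
      _ = W.ρ (conjM (ι n) * κ n⁻¹) (T x) := mulρ _ _ _
      _ = T x := by rw [hone, map_one]; rfl
  have hcinv : ∀ m : ↥M, c m⁻¹ * c m = 1 := by
    intro m
    rw [← hcmul m m⁻¹, mul_inv_cancel, hc1]
  have hcne : ∀ m : ↥M, c m ≠ 0 := by
    intro m h
    have := hcinv m
    rw [h, mul_zero] at this
    exact zero_ne_one this
  have hccomm : ∀ a b : ↥M, c (a * b * a⁻¹ * b⁻¹) = 1 := by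
    intro a b
    rw [hcmul, hcmul, hcmul]
    have h1 := hcinv a
    have h2 := hcinv b
    calc c b⁻¹ * (c a⁻¹ * (c b * c a)) = (c b⁻¹ * c b) * (c a⁻¹ * c a) := by ring
      _ = 1 := by rw [h1, h2, mul_one]
  -- the subgroup of G on which c is 1
  let D : Subgroup G :=
    { carrier := {x : G | ∃ hx : x ∈ M, c ⟨x, hx⟩ = 1}
      one_mem' := ⟨M.one_mem, hc1⟩
      mul_mem' := by
        rintro a b ⟨ha, hca⟩ ⟨hb, hcb⟩
        refine ⟨M.mul_mem ha hb, ?_⟩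
        rw [show (⟨a * b, M.mul_mem ha hb⟩ : ↥M) = ⟨a, ha⟩ * ⟨b, hb⟩ from rfl,
          hcmul, hca, hcb, mul_one]
      inv_mem' := by
        rintro a ⟨ha, hca⟩
        refine ⟨M.inv_mem ha, ?_⟩
        have h1 := hcinv ⟨a, ha⟩
        rw [hca, mul_one] at h1
        exact h1 }
  have hND : N ≤ D := by
    intro x hx
    exact ⟨hNM hx, hcN ⟨x, hx⟩⟩
  have hcommD : ⁅M, M⁆ ≤ D := by
    rw [Subgroup.commutator_le]
    intro a ha b hb
    have hmem : a * b * a⁻¹ * b⁻¹ ∈ M :=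
      M.mul_mem (M.mul_mem (M.mul_mem ha hb) (M.inv_mem ha)) (M.inv_mem hb)
    refine ⟨by rw [commutatorElement_def]; exact hmem, ?_⟩
    have he : (⟨⁅a, b⁆, by rw [commutatorElement_def]; exact hmem⟩ : ↥M)
        = ⟨a, ha⟩ * ⟨b, hb⟩ * (⟨a, ha⟩)⁻¹ * (⟨b, hb⟩)⁻¹ := by
      ext
      simp [commutatorElement_def]
    rw [he]
    exact hccomm _ _
  have hMD : ∀ m : ↥M, c m = 1 := by
    intro m
    obtain ⟨hx, hcx⟩ := (sup_le hND hcommD) (hMgen m.2)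
    exact hcx
  have hAT : ∀ m : ↥M, A m = T := by
    intro m
    rw [hA m, hMD m, one_smul]
  have hTM : ∀ (m : ↥M) (x : (W : Type)), T (W.ρ m x) = W.ρ (conjM m) (T x) := by
    intro m x
    have h1 : A m (W.ρ m x) = T (W.ρ m x) := by rw [hAT m]
    rw [← h1, hAx, mulρ, inv_mul_cancel, map_one]
    rfl
  haveI hsW : Simple resW := simple_of_char_eq U resW (fun x => (hchW x).trans (hU x).symm)
  haveI : Mono r := mono_of_nonzero_from_simple hr
  have hinj : Function.Injective T := hom_injective r
  have hbij : Function.Bijective T := ⟨hinj, LinearMap.injective_iff_surjective.mp hinj⟩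
  let e : (W : Type) ≃ₗ[ℂ] (W : Type) := LinearEquiv.ofBijective T hbij
  have hconj : ∀ m : ↥M, W.ρ (conjM m) = e.conj (W.ρ m) := by
    intro m
    apply LinearMap.ext
    intro x
    rw [LinearEquiv.conj_apply]
    show W.ρ (conjM m) x = e ((W.ρ m) (e.symm x))
    have h1 : e ((W.ρ m) (e.symm x)) = T ((W.ρ m) (e.symm x)) := rfl
    rw [h1, hTM m, show T (e.symm x) = e (e.symm x) from rfl, e.apply_symm_apply]
  intro m
  have hch2 : W.character (conjM m) = W.character m := by
    show LinearMap.trace ℂ _ (W.ρ (conjM m)) = LinearMap.trace ℂ _ (W.ρ m)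
    rw [hconj m]
    exact LinearMap.trace_conj' (W.ρ m) e
  calc lam0 ⟨g * ↑m * g⁻¹, hM.conj_mem ↑m m.2 g⟩
      = W.character (conjM m) := (hW (conjM m)).symm
    _ = W.character m := hch2
    _ = lam0 m := hW m

end Stmt1Aux
end
end

/-- If `M/N` is a non-abelian chief factor of `G` and `λ ∈ Irr(N)` extends to
`λ₀ ∈ Irr(M)`, then `I_G(λ) = I_G(λ₀)`. -/
theorem stmt1 (G : Type) [Group G] [Fintype G] (N M : Subgroup G)
    [hN : N.Normal] [hM : M.Normal] (hNM : N ≤ M)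
    (hchief : N ≠ M ∧ ∀ K : Subgroup G, K.Normal → N ≤ K → K ≤ M → K = N ∨ K = M)
    (hnonab : ¬ ∀ a ∈ M, ∀ b ∈ M, a * b * a⁻¹ * b⁻¹ ∈ N)
    (lam : ↥N → ℂ) (hlam : IsIrrChar ↥N lam)
    (lam0 : ↥M → ℂ) (hlam0 : IsIrrChar ↥M lam0)
    (hext : ∀ (n : G) (hn : n ∈ N), lam0 ⟨n, hNM hn⟩ = lam ⟨n, hn⟩) :
    inertia N lam = inertia M lam0 := by
  obtain ⟨U, hUs, hU⟩ := hlam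
  obtain ⟨W, hWs, hW⟩ := hlam0
  haveI hKnorm : (N ⊔ ⁅M, M⁆).Normal := inferInstance
  have hKM : N ⊔ ⁅M, M⁆ ≤ M := by
    refine sup_le hNM ?_
    rw [Subgroup.commutator_le]
    intro a ha b hb
    rw [commutatorElement_def]
    exact M.mul_mem (M.mul_mem (M.mul_mem ha hb) (M.inv_mem ha)) (M.inv_mem hb)
  have hKN : N ⊔ ⁅M, M⁆ ≠ N := by
    intro hEq
    apply hnonab
    intro a ha b hb
    open scoped commutatorElement in
    have h1 : ⁅a, b⁆ ∈ N ⊔ ⁅M, M⁆ :=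
      Subgroup.mem_sup_right (Subgroup.commutator_mem_commutator ha hb)
    rw [hEq] at h1
    rwa [commutatorElement_def] at h1
  have hMgen : M ≤ N ⊔ ⁅M, M⁆ := by
    rcases hchief.2 (N ⊔ ⁅M, M⁆) hKnorm le_sup_left hKM with h | h
    · exact absurd h hKN
    · exact h.ge
  apply le_antisymm
  · intro x hx
    exact fun m => Stmt1Aux.key N M hNM hMgen lam U hUs hU lam0 W hWs hW hext x hx m
  · intro x hx
    intro n
    have h1 := hx ⟨(n : G), hNM n.2⟩
    have h2 := hext (x * ↑n * x⁻¹) (hN.conj_mem ↑n n.2 x)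
    have h3 := hext ↑n n.2
    calc lam ⟨x * ↑n * x⁻¹, hN.conj_mem ↑n n.2 x⟩
        = lam0 ⟨x * ↑n * x⁻¹, hNM (hN.conj_mem ↑n n.2 x)⟩ := h2.symm
      _ = lam0 ⟨↑n, hNM n.2⟩ := h1
      _ = lam n := h3
end

section
/- Let M ≅ PSL(2,7) be a minimal normal subgroup of a finite group G. Then every non-linear rational-valued irreducible character of G whose kernel does not contain M has degree at least 6. -/
open scoped BigOperators Classical
open CategoryTheory

section Stmt6Aux
open Polynomial

lemma stmt6_zmod7_sum (ζ : ℂ) (hζ : IsPrimitiveRoot ζ 7) (c : ZMod 7) :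
    (∑ j : ZMod 7, ζ ^ (c * j).val) = if c = 0 then 7 else 0 := by
  haveI : Fact (Nat.Prime 7) := ⟨by norm_num⟩
  have base : (∑ j : ZMod 7, ζ ^ (j).val) = 0 := by
    have hgeom : ∑ i ∈ Finset.range 7, ζ ^ i = 0 := hζ.geom_sum_eq_zero (by norm_num)
    rw [← hgeom]
    apply Finset.sum_nbij' (i := fun j => (j : ZMod 7).val) (j := fun i => (i : ZMod 7))
    · intro a _; exact Finset.mem_range.mpr (ZMod.val_lt a)
    · intro a _; exact Finset.mem_univ _
    · intro a _; simp [ZMod.natCast_val, ZMod.cast_id]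
    · intro a ha; exact ZMod.val_cast_of_lt (Finset.mem_range.mp ha)
    · intro a _; rfl
  by_cases hc : c = 0
  · simp [hc]
  · rw [if_neg hc, ← base]
    exact Fintype.sum_equiv (Equiv.mulLeft₀ c hc) _ _ (fun j => rfl)


lemma stmt6_zmod7_reindex {M : Type*} [AddCommMonoid M] (f : ℕ → M) :
    ∑ j : ZMod 7, f j.val = ∑ i ∈ Finset.range 7, f i := by
  apply Finset.sum_nbij' (i := fun j => (j : ZMod 7).val) (j := fun i => (i : ZMod 7))
  · intro a _; exact Finset.mem_range.mpr (ZMod.val_lt a)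
  · intro a _; exact Finset.mem_univ _
  · intro a _; simp [ZMod.natCast_val, ZMod.cast_id]
  · intro a ha; exact ZMod.val_cast_of_lt (Finset.mem_range.mp ha)
  · intro a _; rfl

lemma stmt6_key {V : Type*} [AddCommGroup V] [Module ℂ V] [FiniteDimensional ℂ V]
    (A : V →ₗ[ℂ] V) (h7 : A ^ 7 = 1) (hA : A ≠ 1) (q : ℚ)
    (ht : LinearMap.trace ℂ V A = (q : ℂ)) : 6 ≤ Module.finrank ℂ V := by
  haveI : Fact (Nat.Prime 7) := ⟨by norm_num⟩
  obtain ⟨ζ, hζ⟩ : ∃ ζ : ℂ, IsPrimitiveRoot ζ 7 := ⟨_, Complex.isPrimitiveRoot_exp 7 (by norm_num)⟩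
  have hz1 : ζ ^ (7:ℕ) = 1 := hζ.pow_eq_one
  -- additivity of exponentiation indexed by ZMod 7
  have hzadd : ∀ a b : ZMod 7, ζ ^ (a + b).val = ζ ^ a.val * ζ ^ b.val := by
    intro a b
    rw [← pow_add, ZMod.val_add, ← pow_eq_pow_mod _ hz1]
  have hAadd : ∀ a b : ZMod 7, A ^ (a + b).val = A ^ a.val * A ^ b.val := by
    intro a b
    rw [← pow_add, ZMod.val_add, ← pow_eq_pow_mod _ h7]
  -- the projections
  set P : ZMod 7 → (V →ₗ[ℂ] V) :=
    fun j => (7:ℂ)⁻¹ • ∑ k : ZMod 7, ζ ^ (-(j*k)).val • A ^ (k.val) with hP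
  have hterm : ∀ c j k : ZMod 7, ζ ^ (j*c).val • (ζ ^ (-(j*k)).val • A ^ k.val)
      = ζ ^ ((c-k)*j).val • A ^ k.val := by
    intro c j k
    rw [smul_smul]
    congr 1
    rw [show (c-k)*j = j*c + -(j*k) by ring, hzadd]
  have O1 : ∀ c : ZMod 7, (∑ j : ZMod 7, ζ ^ (j * c).val • P j) = A ^ (c.val) := by
    intro c
    have h1 : ∀ j : ZMod 7, ζ ^ (j*c).val • P j
        = (7:ℂ)⁻¹ • ∑ k : ZMod 7, ζ ^ ((c-k)*j).val • A ^ k.val := by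
      intro j
      rw [hP]
      dsimp only
      rw [smul_comm]
      congr 1
      rw [Finset.smul_sum]
      exact Finset.sum_congr rfl fun k _ => hterm c j k
    rw [Finset.sum_congr rfl fun j _ => h1 j, ← Finset.smul_sum, Finset.sum_comm]
    have h2 : ∀ k : ZMod 7, (∑ j : ZMod 7, ζ ^ ((c-k)*j).val • A ^ k.val)
        = (if c - k = 0 then (7:ℂ) else 0) • A ^ k.val := by
      intro k
      rw [← Finset.sum_smul, stmt6_zmod7_sum ζ hζ (c-k)]
    rw [Finset.sum_congr rfl fun k _ => h2 k, Finset.sum_eq_single c (fun b _ hb => by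
        rw [if_neg (by simpa [sub_eq_zero] using fun h => hb h.symm), zero_smul])
      (by simp), if_pos (by simp), smul_smul]
    norm_num
  -- idempotency
  have O2 : ∀ j : ZMod 7, (P j) * (P j) = P j := by
    intro j
    set S : V →ₗ[ℂ] V := ∑ k : ZMod 7, ζ ^ (-(j*k)).val • A ^ (k.val) with hS
    have hSS : S * S = (7:ℂ) • S := by
      rw [hS, Finset.sum_mul_sum]
      have h1 : ∀ k l : ZMod 7,
          (ζ ^ (-(j*k)).val • A ^ k.val) * (ζ ^ (-(j*l)).val • A ^ l.val)
            = ζ ^ (-(j*(k+l))).val • A ^ ((k+l).val) := by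
        intro k l
        rw [smul_mul_assoc, mul_smul_comm, smul_smul, ← hAadd, ← hzadd]
        congr 2
        ring
      calc (∑ k : ZMod 7, ∑ l : ZMod 7,
              (ζ ^ (-(j*k)).val • A ^ k.val) * (ζ ^ (-(j*l)).val • A ^ l.val))
          = ∑ k : ZMod 7, ∑ l : ZMod 7, ζ ^ (-(j*(k+l))).val • A ^ ((k+l).val) := by
            exact Finset.sum_congr rfl fun k _ => Finset.sum_congr rfl fun l _ => h1 k l
        _ = ∑ _k : ZMod 7, ∑ s : ZMod 7, ζ ^ (-(j*s)).val • A ^ (s.val) := by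
            refine Finset.sum_congr rfl fun k _ => ?_
            exact Fintype.sum_equiv (Equiv.addLeft k) _ _ (fun l => rfl)
        _ = (7:ℂ) • S := by
            rw [Finset.sum_const, hS]
            simp only [Finset.card_univ, ZMod.card]
            rw [← Nat.cast_smul_eq_nsmul ℂ]
            norm_num
    rw [hP]
    dsimp only
    rw [smul_mul_assoc, mul_smul_comm, smul_smul, ← hS, hSS, smul_smul]
    norm_num
  -- trace of each P j is a natural number (the rank), positive if P j ≠ 0
  have hex : ∀ j : ZMod 7, ∃ r : ℕ,
      LinearMap.trace ℂ V (P j) = (r : ℂ) ∧ (P j ≠ 0 → 1 ≤ r) := by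
    intro j
    obtain ⟨p, hp⟩ := (LinearMap.isProj_iff_isIdempotentElem (P j)).mpr
      (O2 j)
    refine ⟨Module.finrank ℂ p, hp.trace, fun hne => ?_⟩
    obtain ⟨x, hx⟩ : ∃ x, P j x ≠ 0 := by
      by_contra hall
      push_neg at hall
      exact hne (LinearMap.ext fun x => hall x)
    have : Nontrivial p := ⟨⟨⟨P j x, hp.map_mem x⟩, 0, by simpa using hx⟩⟩
    exact Module.finrank_pos
  choose m hm hmpos using hex
  -- trace identities
  have T : ∀ c : ZMod 7, (∑ j : ZMod 7, ζ ^ (j * c).val * (m j : ℂ))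
      = LinearMap.trace ℂ V (A ^ c.val) := by
    intro c
    rw [← O1 c, map_sum]
    refine Finset.sum_congr rfl fun j _ => ?_
    rw [LinearMap.map_smul, hm j, smul_eq_mul]
  have hn : (∑ j : ZMod 7, (m j : ℂ)) = (Module.finrank ℂ V : ℂ) := by
    have := T 0
    simp only [mul_zero, ZMod.val_zero, pow_zero, one_mul] at this
    rw [this]
    simpa using LinearMap.trace_one ℂ V
  have hq : (∑ j : ZMod 7, ζ ^ (j.val) * (m j : ℂ)) = (q : ℂ) := by
    have := T 1
    rw [ZMod.val_one, pow_one, ht] at this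
    rw [← this]
    exact Finset.sum_congr rfl fun j _ => by rw [mul_one]
  -- some j ≠ 0 has m j ≥ 1
  have hfaith : ∃ j : ZMod 7, j ≠ 0 ∧ 1 ≤ m j := by
    by_contra hno
    push_neg at hno
    have hPz : ∀ j : ZMod 7, j ≠ 0 → P j = 0 := by
      intro j hj
      by_contra hne
      exact absurd (hmpos j hne) (Nat.not_le.mpr (hno j hj))
    have hA1 : A = P 0 := by
      have := O1 1
      rw [ZMod.val_one, pow_one] at this
      rw [← this, Finset.sum_eq_single 0 (fun b _ hb => by rw [hPz b hb, smul_zero])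
        (by simp)]
      simp
    have h11 : (1 : V →ₗ[ℂ] V) = P 0 := by
      have := O1 0
      rw [ZMod.val_zero, pow_zero] at this
      rw [← this, Finset.sum_eq_single 0 (fun b _ hb => by rw [hPz b hb, smul_zero])
        (by simp)]
      simp
    exact hA (hA1.trans h11.symm)
  obtain ⟨j0, hj0ne, hj0⟩ := hfaith
  -- the natural numbers m', indexed by ℕ
  set m' : ℕ → ℕ := fun i => m (i : ZMod 7) with hm'
  have hmval : ∀ j : ZMod 7, m' j.val = m j := by
    intro j
    rw [hm']
    simp [ZMod.natCast_val, ZMod.cast_id]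
  -- the polynomial
  set f : Polynomial ℚ :=
    (∑ i ∈ Finset.range 7, Polynomial.C ((m' i : ℚ)) * Polynomial.X ^ i) - Polynomial.C q
    with hf
  have heval : Polynomial.aeval ζ f = 0 := by
    rw [hf, map_sub, map_sum]
    have : ∀ i ∈ Finset.range 7,
        Polynomial.aeval ζ (Polynomial.C ((m' i : ℚ)) * Polynomial.X ^ i)
          = ζ ^ i * (m' i : ℂ) := by
      intro i _
      rw [map_mul, map_pow, Polynomial.aeval_C, Polynomial.aeval_X, mul_comm]
      norm_num
    rw [Finset.sum_congr rfl this, Polynomial.aeval_C]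
    have : (∑ i ∈ Finset.range 7, ζ ^ i * (m' i : ℂ)) = (q : ℂ) := by
      rw [← hq, ← stmt6_zmod7_reindex (fun i => ζ ^ i * (m' i : ℂ))]
      exact Finset.sum_congr rfl fun j _ => by rw [hmval]
    rw [this]
    norm_num
  have hcf : ∀ n : ℕ, f.coeff n
      = (if n < 7 then (m' n : ℚ) else 0) - (if n = 0 then q else 0) := by
    intro n
    rw [hf, Polynomial.coeff_sub, Polynomial.finset_sum_coeff, Polynomial.coeff_C]
    congr 1
    have : ∀ i ∈ Finset.range 7,
        (Polynomial.C ((m' i : ℚ)) * Polynomial.X ^ i).coeff n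
          = if i = n then (m' i : ℚ) else 0 := by
      intro i _
      rw [Polynomial.coeff_C_mul, Polynomial.coeff_X_pow]
      by_cases h : i = n
      · subst h; simp
      · rw [if_neg (fun hh => h hh.symm), if_neg h, mul_zero]
    rw [Finset.sum_congr rfl this, Finset.sum_ite_eq' (Finset.range 7)]
    by_cases h : n < 7 <;> simp [h, Finset.mem_range]
  have hdf : f.natDegree ≤ 6 := by
    rw [Polynomial.natDegree_le_iff_coeff_eq_zero]
    intro N hN
    rw [hcf]
    rw [if_neg (by omega), if_neg (by omega), sub_zero]
  have hdvd : Polynomial.cyclotomic 7 ℚ ∣ f := by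
    rw [Polynomial.cyclotomic_eq_minpoly_rat hζ (by norm_num)]
    exact minpoly.dvd ℚ ζ heval
  obtain ⟨g, hg⟩ := hdvd
  -- all m' i, 1 ≤ i ≤ 6, are equal
  have hall : ∀ i : ℕ, 1 ≤ i → i ≤ 6 → m' i = m' j0.val := by
    have hj0v : 1 ≤ j0.val ∧ j0.val ≤ 6 := by
      constructor
      · by_contra h
        exact hj0ne (by
          have : j0.val = 0 := by omega
          exact (ZMod.val_eq_zero j0).mp this)
      · have := ZMod.val_lt j0
        omega
    have hcoe : ∀ i : ℕ, 1 ≤ i → i ≤ 6 → (m' i : ℚ) = g.coeff 0 := by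
      have hgne : g ≠ 0 := by
        intro h0
        rw [h0, mul_zero] at hg
        have h1 := hcf j0.val
        rw [hg, Polynomial.coeff_zero, if_pos (by omega), if_neg (by omega), sub_zero] at h1
        have : m' j0.val = 0 := by exact_mod_cast h1.symm
        rw [hmval] at this
        omega
      have hdeg : g.natDegree = 0 := by
        have hcyc0 : (Polynomial.cyclotomic 7 ℚ) ≠ 0 := Polynomial.cyclotomic_ne_zero 7 ℚ
        have := Polynomial.natDegree_mul hcyc0 hgne
        rw [← hg, Polynomial.natDegree_cyclotomic] at this
        have h7 : Nat.totient 7 = 6 := by decide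
        rw [h7] at this
        omega
      obtain ⟨c, hc⟩ := Polynomial.natDegree_eq_zero.mp hdeg
      intro i h1 h6
      have h2 := hcf i
      rw [hg, ← hc, Polynomial.coeff_mul_C, if_pos (by omega), if_neg (by omega), sub_zero,
        Polynomial.cyclotomic_prime, Polynomial.finset_sum_coeff] at h2
      have : ∀ k ∈ Finset.range 7, (Polynomial.X ^ k : Polynomial ℚ).coeff i
          = if k = i then 1 else 0 := by
        intro k _
        rw [Polynomial.coeff_X_pow]
        by_cases h : k = i
        · subst h; simp
        · rw [if_neg (fun hh => h hh.symm), if_neg h]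
      rw [Finset.sum_congr rfl this, Finset.sum_ite_eq' (Finset.range 7),
        if_pos (Finset.mem_range.mpr (by omega)), one_mul] at h2
      rw [← hc, Polynomial.coeff_C, if_pos rfl]
      exact h2.symm
    intro i h1 h6
    have := (hcoe i h1 h6).trans (hcoe j0.val hj0v.1 hj0v.2).symm
    exact_mod_cast this
  -- count
  have hsum : (∑ j : ZMod 7, m j) = Module.finrank ℂ V := by
    have : ((∑ j : ZMod 7, m j : ℕ) : ℂ) = ((Module.finrank ℂ V : ℕ) : ℂ) := by
      push_cast
      exact hn
    exact_mod_cast this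
  have hge : ∀ j : ZMod 7, j ≠ 0 → 1 ≤ m j := by
    intro j hj
    have hv : 1 ≤ j.val ∧ j.val ≤ 6 := by
      constructor
      · by_contra h
        exact hj (by
          have : j.val = 0 := by omega
          exact (ZMod.val_eq_zero j).mp this)
      · have := ZMod.val_lt j
        omega
    rw [← hmval j, hall j.val hv.1 hv.2, hmval]
    exact hj0
  rw [← hsum]
  calc (6:ℕ) = ∑ _j ∈ Finset.univ.erase (0 : ZMod 7), 1 := by
        rw [Finset.sum_const, Finset.card_erase_of_mem (Finset.mem_univ 0)]
        simp [ZMod.card]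
    _ ≤ ∑ j ∈ Finset.univ.erase (0 : ZMod 7), m j :=
        Finset.sum_le_sum fun j hj => hge j (Finset.ne_of_mem_erase hj)
    _ ≤ ∑ j : ZMod 7, m j :=
        Finset.sum_le_sum_of_subset (Finset.erase_subset _ _)

def slu7 : Matrix.SpecialLinearGroup (Fin 2) (ZMod 7) :=
  ⟨!![1,1;0,1], by simp [Matrix.det_fin_two]⟩

lemma slu7_pow7 : slu7 ^ 7 = 1 := by
  apply Subtype.ext
  show ((slu7 : Matrix (Fin 2) (Fin 2) (ZMod 7)) ^ 7 :) = 1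
  rw [show (slu7 : Matrix (Fin 2) (Fin 2) (ZMod 7)) = !![1,1;0,1] from rfl]
  decide

lemma slu7_ne : (QuotientGroup.mk slu7 : Matrix.ProjectiveSpecialLinearGroup (Fin 2) (ZMod 7)) ≠ 1 := by
  intro h
  rw [QuotientGroup.eq_one_iff] at h
  have := Subgroup.mem_center_iff.mp h ⟨!![0,6;1,0], by simp [Matrix.det_fin_two]; decide⟩
  have h2 := congrArg
    (fun m : Matrix.SpecialLinearGroup (Fin 2) (ZMod 7) => (m : Matrix (Fin 2) (Fin 2) (ZMod 7)) 0 0) this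
  simp [slu7, Matrix.mul_apply, Fin.sum_univ_two] at h2
  exact absurd h2 (by decide)

lemma psl7_order :
    orderOf (QuotientGroup.mk slu7 : Matrix.ProjectiveSpecialLinearGroup (Fin 2) (ZMod 7)) = 7 := by
  have h7 : (QuotientGroup.mk slu7 : Matrix.ProjectiveSpecialLinearGroup (Fin 2) (ZMod 7)) ^ 7 = 1 := by
    rw [← QuotientGroup.mk_pow, slu7_pow7]; rfl
  have hd := orderOf_dvd_of_pow_eq_one h7
  rcases (Nat.Prime.eq_one_or_self_of_dvd (by norm_num) _ hd) with h | h
  · exact absurd (orderOf_eq_one_iff.mp h) slu7_ne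
  · exact h

end Stmt6Aux

/-- If `M ≅ PSL(2,7)` is a minimal normal subgroup of `G`, then every non-linear
rational-valued irreducible character of `G` whose kernel does not contain `M` has degree
at least `6`. -/
theorem stmt6 (G : Type) [Group G] [Fintype G] (M : Subgroup G) [hM : M.Normal]
    (hbot : M ≠ ⊥)
    (hmin : ∀ K : Subgroup G, K.Normal → K ≤ M → K = ⊥ ∨ K = M)
    (e : ↥M ≃* Matrix.ProjectiveSpecialLinearGroup (Fin 2) (ZMod 7)) :
    ∀ χ : G → ℂ, IsIrrChar G χ → RatValued χ → 1 < (χ 1).re → ¬ KerContains χ M →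
      (6 : ℝ) ≤ (χ 1).re := by
  intro χ hirr hrat _ hker
  obtain ⟨V, _, hVchi⟩ := hirr
  let K : Subgroup G :=
  { carrier := {g | V.ρ g = 1}
    one_mem' := by show V.ρ 1 = 1; rw [map_one]
    mul_mem' := by
      intro a b ha hb
      show V.ρ (a * b) = 1
      rw [map_mul, ha, hb, one_mul]
    inv_mem' := by
      intro a ha
      show V.ρ a⁻¹ = 1
      have h2 : V.ρ a⁻¹ * V.ρ a = 1 := by rw [← map_mul, inv_mul_cancel, map_one]
      rwa [show V.ρ a = 1 from ha, mul_one] at h2 }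
  have hKmem : ∀ g : G, g ∈ K ↔ V.ρ g = 1 := fun g => Iff.rfl
  have hKnormal : K.Normal := by
    constructor
    intro n hn g
    show V.ρ (g * n * g⁻¹) = 1
    rw [map_mul, map_mul, show V.ρ n = 1 from hn, mul_one, ← map_mul, mul_inv_cancel, map_one]
  have hMK : ¬ (K ⊓ M = M) := by
    intro h
    apply hker
    intro n hnM
    have hnKM : n ∈ K ⊓ M := by rw [h]; exact hnM
    have hnK : n ∈ K := hnKM.1
    rw [← hVchi, ← hVchi]
    show LinearMap.trace ℂ V (V.ρ n) = LinearMap.trace ℂ V (V.ρ 1)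
    rw [map_one, show V.ρ n = 1 from hnK]
  have hKM : K ⊓ M = ⊥ := by
    have hnorm : (K ⊓ M).Normal := by
      constructor
      intro n hn g
      exact ⟨hKnormal.conj_mem n hn.1 g, hM.conj_mem n hn.2 g⟩
    rcases hmin (K ⊓ M) hnorm inf_le_right with h | h
    · exact h
    · exact absurd h hMK
  set u : ↥M := e.symm (QuotientGroup.mk slu7) with hu
  have hu7 : orderOf u = 7 := by
    rw [← psl7_order]
    exact e.symm.orderOf_eq _
  have huG : orderOf (u : G) = 7 := by
    rw [← hu7]
    exact orderOf_injective M.subtype Subtype.coe_injective u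
  have hA7 : (V.ρ (u : G)) ^ 7 = 1 := by
    rw [← map_pow, ← huG, pow_orderOf_eq_one, map_one]
  have hAne : V.ρ (u : G) ≠ 1 := by
    intro h
    have hmem : (u : G) ∈ K ⊓ M := ⟨h, u.2⟩
    rw [hKM, Subgroup.mem_bot] at hmem
    have : orderOf (u : G) = 1 := by rw [hmem, orderOf_one]
    omega
  obtain ⟨q, hqv⟩ := hrat (u : G)
  have htr : LinearMap.trace ℂ V (V.ρ (u : G)) = (q : ℂ) := by
    have h1 : V.character (u : G) = (q : ℂ) := by rw [hVchi]; exact hqv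
    exact h1
  have h6 : 6 ≤ Module.finrank ℂ V := stmt6_key _ hA7 hAne q htr
  have hχ1 : χ 1 = (Module.finrank ℂ V : ℂ) := by rw [← hVchi, FDRep.char_one]
  rw [hχ1, Complex.natCast_re]
  exact_mod_cast h6
end
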